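/- The only rational points on the elliptic curve E: y² = x³ + 4x (i.e., y² = x(x² + 4)) are (0, 0), (2, 4), (2, -4), and the point at infinity. -/
import Mathlib

lemma copr_of_no_prime (A B : ℕ) (H : ∀ p, p.Prime → p ∣ A → p ∣ B → False) :
    Nat.Coprime A B := by
  by_contra h
  obtain ⟨p, pp, pd⟩ := Nat.exists_prime_and_dvd h
  exact H p pp (pd.trans (Nat.gcd_dvd_left _ _)) (pd.trans (Nat.gcd_dvd_right _ _))

/-- inner step: no x with x² = 4u⁴ + v⁴ (u>0, v odd, coprime), assuming
no smaller counterexample to x⁴ = y⁴ + z². -/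
lemma inner_step (x : ℕ)
    (IH : ∀ x', x' < x → ∀ y z : ℕ, 0 < y → 0 < z → x' ^ 4 ≠ y ^ 4 + z ^ 2)
    (u v : ℕ) (hu : 0 < u) (hv : Odd v) (huv : Nat.Coprime u v)
    (hx : x ^ 2 = 4 * u ^ 4 + v ^ 4) : False := by
  have hv0 : 0 < v := hv.pos
  have hvo2 : v ^ 2 % 2 = 1 := Nat.odd_iff.1 ((hv.pow : Odd (v ^ 2)))
  have hxo : x % 2 = 1 := by
    have h2 : x ^ 2 % 2 = 1 := by
      have : v ^ 4 % 2 = 1 := Nat.odd_iff.1 ((hv.pow : Odd (v ^ 4)))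
      omega
    rcases Nat.even_or_odd x with he | ho
    · exfalso
      have : x ^ 2 % 2 = 0 := by
        obtain ⟨k, rfl⟩ := he; ring_nf; omega
      omega
    · exact Nat.odd_iff.1 ho
  have h4 : v ^ 4 < x ^ 2 := by nlinarith [pow_pos hu 4]
  have hgt : v ^ 2 < x :=
    lt_of_pow_lt_pow_left₀ 2 (Nat.zero_le x) (by nlinarith [h4] : (v ^ 2) ^ 2 < x ^ 2)
  -- write x = v² + 2d
  have hxeq : x = v ^ 2 + 2 * ((x - v ^ 2) / 2) := by omega
  set d := (x - v ^ 2) / 2 with hd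
  have hd1 : 1 ≤ d := by
    rcases Nat.eq_zero_or_pos d with h0 | h1
    · exfalso; rw [h0] at hxeq; nlinarith
    · exact h1
  have key : d * (d + v ^ 2) = u ^ 4 := by nlinarith
  have hcop : Nat.Coprime d (d + v ^ 2) := by
    apply copr_of_no_prime
    intro p pp p1 p2
    have pv2 : p ∣ v ^ 2 := by
      have := Nat.dvd_sub p2 p1
      simpa using this
    have pv : p ∣ v := pp.dvd_of_dvd_pow (n := 2) pv2
    have pu : p ∣ u := pp.dvd_of_dvd_pow (n := 4) (key ▸ Dvd.dvd.mul_right p1 _)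
    have : p ∣ 1 := huv ▸ Nat.dvd_gcd pu pv
    exact pp.one_lt.ne' (Nat.dvd_one.1 this)
  obtain ⟨p, hp⟩ : ∃ p, d = p ^ 4 :=
    exists_eq_pow_of_mul_eq_pow (Nat.isUnit_iff.2 hcop) key
  obtain ⟨q, hq⟩ : ∃ q, d + v ^ 2 = q ^ 4 :=
    exists_eq_pow_of_mul_eq_pow (Nat.isUnit_iff.2 hcop.symm) (by linarith [key] : (d + v ^ 2) * d = u ^ 4)
  have hp0 : 0 < p := by
    rcases Nat.eq_zero_or_pos p with h0 | h1
    · exfalso; rw [h0] at hp; simp at hp; omega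
    · exact h1
  have hqx : q < x := by
    have h1 : q ≤ q ^ 4 := Nat.le_self_pow (by norm_num) q
    omega
  exact IH q hqx p v hp0 hv0 (by omega)

/-- Case B helper: x² = M² + N², y² = 2MN, M even, coprime. -/
lemma caseB_step (x : ℕ)
    (IH : ∀ x', x' < x → ∀ y z : ℕ, 0 < y → 0 < z → x' ^ 4 ≠ y ^ 4 + z ^ 2)
    (y M N : ℕ) (hy : 0 < y) (hM : M % 2 = 0) (hN : N % 2 = 1)
    (hco : Nat.Coprime M N) (hsum : x ^ 2 = M ^ 2 + N ^ 2)
    (hprod : y ^ 2 = 2 * (M * N)) : False := by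
  obtain ⟨k, rfl⟩ : ∃ k, M = 2 * k := ⟨M / 2, by omega⟩
  -- y is even
  have hy2 : y % 2 = 0 := by
    rcases Nat.even_or_odd y with he | ho
    · exact Nat.even_iff.1 he
    · exfalso
      have : y ^ 2 % 2 = 1 := Nat.odd_iff.1 ho.pow
      omega
  obtain ⟨w, rfl⟩ : ∃ w, y = 2 * w := ⟨y / 2, by omega⟩
  have hw : k * N = w ^ 2 := by nlinarith
  have hckN : Nat.Coprime k N := Nat.Coprime.coprime_dvd_left ⟨2, by ring⟩ hco
  obtain ⟨u, hu⟩ : ∃ u, k = u ^ 2 :=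
    exists_eq_pow_of_mul_eq_pow (Nat.isUnit_iff.2 hckN) hw
  obtain ⟨v, hv⟩ : ∃ v, N = v ^ 2 :=
    exists_eq_pow_of_mul_eq_pow (Nat.isUnit_iff.2 hckN.symm) (by linarith [hw] : N * k = w ^ 2)
  have hvodd : Odd v := by
    rcases Nat.even_or_odd v with he | ho
    · exfalso
      obtain ⟨t, rfl⟩ := he
      have : N % 2 = 0 := by rw [hv]; ring_nf; omega
      omega
    · exact ho
  have huv : Nat.Coprime u v := by
    have : Nat.Coprime (u ^ 2) (v ^ 2) := hu ▸ hv ▸ hckN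
    exact (Nat.coprime_pow_left_iff two_pos _ _).1 ((Nat.coprime_pow_right_iff two_pos _ _).1 this)
  have hu0 : 0 < u := by
    rcases Nat.eq_zero_or_pos u with h0 | h1
    · exfalso
      rw [h0] at hu; simp at hu
      subst hu
      simp at hprod
      omega
    · exact h1
  exact inner_step x IH u v hu0 hvodd huv (by subst hu hv; nlinarith)

/-- Fermat: x⁴ = y⁴ + z² has no solutions with y, z positive. -/
theorem no_fourth_diff : ∀ x y z : ℕ, 0 < y → 0 < z → x ^ 4 ≠ y ^ 4 + z ^ 2 := by
  intro x
  induction x using Nat.strong_induction_on with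
  | _ x IH =>
    intro y z hy hz h
    have hy4 : 0 < y ^ 4 := pow_pos hy 4
    have hz2 : 0 < z ^ 2 := pow_pos hz 2
    have hx : 0 < x := by
      rcases Nat.eq_zero_or_pos x with h0 | h1
      · exfalso; rw [h0] at h; simp at h; omega
      · exact h1
    set g := Nat.gcd x y with hg
    by_cases hg1 : g = 1
    · -- primitive case
      have hco : Nat.Coprime (y ^ 2) z := by
        apply copr_of_no_prime
        intro p pp p1 p2
        have pyy : p ∣ y := pp.dvd_of_dvd_pow (n := 2) p1
        have px : p ∣ x := by
          apply pp.dvd_of_dvd_pow (n := 4)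
          rw [h]
          exact Nat.dvd_add (pyy.pow (by norm_num)) (p2.pow (by norm_num))
        have : p ∣ 1 := hg1 ▸ hg ▸ Nat.dvd_gcd px pyy
        exact pp.one_lt.ne' (Nat.dvd_one.1 this)
      have ht : PythagoreanTriple ((y ^ 2 : ℕ) : ℤ) ((z : ℕ) : ℤ) ((x ^ 2 : ℕ) : ℤ) := by
        have hz' : ((x : ℤ)) ^ 4 = (y : ℤ) ^ 4 + (z : ℤ) ^ 2 := by exact_mod_cast h
        show ((y ^ 2 : ℕ) : ℤ) * _ + _ * _ = _ * _
        push_cast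
        nlinarith [hz']
      have hgcd : Int.gcd ((y ^ 2 : ℕ) : ℤ) ((z : ℕ) : ℤ) = 1 := by
        rw [Int.gcd_natCast_natCast]; exact hco
      obtain ⟨m, n, hmn, hz2', hmnco, hpar⟩ :=
        PythagoreanTriple.coprime_classification.mp ⟨ht, hgcd⟩
      have hx2 : ((x ^ 2 : ℕ) : ℤ) = m ^ 2 + n ^ 2 := by
        rcases hz2' with h' | h'
        · exact h'
        · exfalso
          have h1 : (0 : ℤ) ≤ m ^ 2 + n ^ 2 := by positivity
          have h2 : (0 : ℤ) < ((x ^ 2 : ℕ) : ℤ) := by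
            exact_mod_cast pow_pos hx 2
          omega
      set M := m.natAbs with hMdef
      set N := n.natAbs with hNdef
      have hm2 : ((M : ℤ)) ^ 2 = m ^ 2 := by simp [hMdef, Int.natAbs_sq]
      have hn2 : ((N : ℤ)) ^ 2 = n ^ 2 := by simp [hNdef, Int.natAbs_sq]
      have hMN : x ^ 2 = M ^ 2 + N ^ 2 := by
        have : ((x ^ 2 : ℕ) : ℤ) = ((M ^ 2 + N ^ 2 : ℕ) : ℤ) := by
          push_cast
          rw [hm2, hn2]; exact hx2
        exact_mod_cast this
      have hMNco : Nat.Coprime M N := hmnco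
      rcases hmn with ⟨h1, h2⟩ | ⟨h1, h2⟩
      · -- Case A : y² = m² - n², z = 2mn
        have hN0 : 0 < N := by
          rcases Nat.eq_zero_or_pos N with h0 | hpos
          · exfalso
            have : n = 0 := Int.natAbs_eq_zero.1 h0
            rw [this] at h2
            simp at h2
            omega
          · exact hpos
        have hM2 : M ^ 2 = N ^ 2 + y ^ 2 := by
          have hZ : (M : ℤ) ^ 2 = (N : ℤ) ^ 2 + (y : ℤ) ^ 2 := by
            rw [hm2, hn2]
            push_cast at h1
            linarith
          exact_mod_cast hZ
        have hMx : M < x :=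
          lt_of_pow_lt_pow_left₀ 2 (Nat.zero_le x)
            (by linarith [pow_pos hN0 2, hMN] : M ^ 2 < x ^ 2)
        have key : M ^ 4 = N ^ 4 + (x * y) ^ 2 := by
          have e1 : M ^ 4 = (N ^ 2 + y ^ 2) ^ 2 := by rw [← hM2]; ring
          have e2 : (x * y) ^ 2 = (M ^ 2 + N ^ 2) * y ^ 2 := by rw [mul_pow, hMN]
          rw [e1, e2, hM2]; ring
        exact IH M hMx N (x * y) hN0 (by positivity) key
      · -- Case B : y² = 2mn, z = m² - n²
        have hprod : y ^ 2 = 2 * (M * N) := by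
          have := congrArg Int.natAbs h1
          simpa [Int.natAbs_mul, ← hMdef, ← hNdef, mul_assoc] using this
        rcases hpar with ⟨hm, hn⟩ | ⟨hm, hn⟩
        · -- m even, n odd
          have hMe : M % 2 = 0 := by
            have : Even m := Int.even_iff.2 (by omega)
            exact Nat.even_iff.1 (Int.natAbs_even.2 this)
          have hNo : N % 2 = 1 := by
            have h' : ¬ Even n := by rw [Int.even_iff]; omega
            have h'' : ¬ Even N := fun hh => h' (Int.natAbs_even.1 hh)
            rcases Nat.even_or_odd N with he | ho
            · exact absurd he h''
            · exact Nat.odd_iff.1 ho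
          exact caseB_step x IH y M N hy hMe hNo hMNco hMN hprod
        · -- m odd, n even
          have hNe : N % 2 = 0 := by
            have : Even n := Int.even_iff.2 (by omega)
            exact Nat.even_iff.1 (Int.natAbs_even.2 this)
          have hMo : M % 2 = 1 := by
            have h' : ¬ Even m := by rw [Int.even_iff]; omega
            have h'' : ¬ Even M := fun hh => h' (Int.natAbs_even.1 hh)
            rcases Nat.even_or_odd M with he | ho
            · exact absurd he h''
            · exact Nat.odd_iff.1 ho
          exact caseB_step x IH y N M hy hNe hMo hMNco.symm (by omega) (by rw [hprod]; ring)
    · -- non-primitive: divide by the gcd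
      have hgpos : 0 < g := Nat.gcd_pos_of_pos_left y hx
      have hg2 : 2 ≤ g := by omega
      obtain ⟨x₁, hx1⟩ : g ∣ x := Nat.gcd_dvd_left x y
      obtain ⟨y₁, hy1⟩ : g ∣ y := Nat.gcd_dvd_right x y
      have hx10 : 0 < x₁ := by
        rcases Nat.eq_zero_or_pos x₁ with h0 | h1
        · exfalso; rw [h0] at hx1; omega
        · exact h1
      have hy10 : 0 < y₁ := by
        rcases Nat.eq_zero_or_pos y₁ with h0 | h1
        · exfalso; rw [h0] at hy1; omega
        · exact h1
      have hyx4 : y₁ ^ 4 ≤ x₁ ^ 4 := by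
        by_contra hcon
        push_neg at hcon
        have : x ^ 4 < y ^ 4 := by
          rw [hx1, hy1]
          calc (g * x₁) ^ 4 = g ^ 4 * x₁ ^ 4 := by ring
          _ < g ^ 4 * y₁ ^ 4 := by
              exact (Nat.mul_lt_mul_left (pow_pos hgpos 4)).2 hcon
          _ = (g * y₁) ^ 4 := by ring
        omega
      have hzw : z ^ 2 = g ^ 4 * (x₁ ^ 4 - y₁ ^ 4) := by
        have : x ^ 4 = g ^ 4 * x₁ ^ 4 := by rw [hx1]; ring
        have hy' : y ^ 4 = g ^ 4 * y₁ ^ 4 := by rw [hy1]; ring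
        have hmul : g ^ 4 * y₁ ^ 4 ≤ g ^ 4 * x₁ ^ 4 := Nat.mul_le_mul_left _ hyx4
        have hdist : g ^ 4 * (x₁ ^ 4 - y₁ ^ 4) = g ^ 4 * x₁ ^ 4 - g ^ 4 * y₁ ^ 4 :=
          Nat.mul_sub _ _ _
        omega
      have hdvd : g ^ 2 ∣ z := by
        have : (g ^ 2) ^ 2 ∣ z ^ 2 := ⟨x₁ ^ 4 - y₁ ^ 4, by rw [hzw]; ring⟩
        exact (Nat.pow_dvd_pow_iff two_ne_zero).1 this
      obtain ⟨z₁, hz1⟩ := hdvd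
      have hz10 : 0 < z₁ := by
        rcases Nat.eq_zero_or_pos z₁ with h0 | h1
        · exfalso; rw [h0] at hz1; omega
        · exact h1
      have hx1x : x₁ < x := by
        rw [hx1]
        calc x₁ = 1 * x₁ := (one_mul _).symm
        _ < g * x₁ := (Nat.mul_lt_mul_right hx10).2 (by omega)
      apply IH x₁ hx1x y₁ z₁ hy10 hz10
      have : (g ^ 2 * z₁) ^ 2 = g ^ 4 * (x₁ ^ 4 - y₁ ^ 4) := by rw [← hz1]; exact hzw
      have hzz : g ^ 4 * z₁ ^ 2 = g ^ 4 * (x₁ ^ 4 - y₁ ^ 4) := by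
        rw [← this]; ring
      have := Nat.eq_of_mul_eq_mul_left (pow_pos hgpos 4) hzz
      omega

/-- no a with a² = 2t², a ≠ 0 (√2 irrational), by descent -/
lemma sq_eq_two_mul_sq : ∀ u : ℕ, ∀ t : ℕ, u ^ 2 = 2 * t ^ 2 → u = 0 := by
  intro u
  induction u using Nat.strong_induction_on with
  | _ u IH =>
    intro t h
    rcases Nat.eq_zero_or_pos u with hu | hu
    · exact hu
    have hue : 2 ∣ u := Nat.Prime.dvd_of_dvd_pow Nat.prime_two ⟨t ^ 2, h⟩
    obtain ⟨u', rfl⟩ := hue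
    have ht : t ^ 2 = 2 * u' ^ 2 := by ring_nf at h ⊢; omega
    have htu : t < 2 * u' := by nlinarith [sq_nonneg t]
    have := IH t htu u' ht
    subst this
    simp at ht
    omega

/-- L1 (odd case): s odd, coprime to c, s⁴ + 4c⁴ = t²  ⟹  c = 0. -/
lemma L1odd (s c t : ℕ) (hs : Odd s) (hco : Nat.Coprime s c)
    (h : s ^ 4 + 4 * c ^ 4 = t ^ 2) : c = 0 := by
  by_contra hc
  have hc0 : 0 < c := Nat.pos_of_ne_zero hc
  have hs0 : 0 < s := hs.pos
  have hs2 : s ^ 2 % 2 = 1 := Nat.odd_iff.1 (hs.pow : Odd (s ^ 2))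
  have hs4 : s ^ 4 % 2 = 1 := Nat.odd_iff.1 (hs.pow : Odd (s ^ 4))
  have hto : t % 2 = 1 := by
    rcases Nat.even_or_odd t with he | ho
    · exfalso
      obtain ⟨k, rfl⟩ := he
      have : (k + k) ^ 2 % 2 = 0 := by ring_nf; omega
      omega
    · exact Nat.odd_iff.1 ho
  have hts : s ^ 2 < t := by
    have h4 : s ^ 4 < t ^ 2 := by nlinarith [pow_pos hc0 4]
    exact lt_of_pow_lt_pow_left₀ 2 (Nat.zero_le t) (by nlinarith [h4] : (s ^ 2) ^ 2 < t ^ 2)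
  have hteq : t = s ^ 2 + 2 * ((t - s ^ 2) / 2) := by omega
  set d := (t - s ^ 2) / 2 with hd
  have hd1 : 1 ≤ d := by
    rcases Nat.eq_zero_or_pos d with h0 | h1
    · exfalso; rw [h0] at hteq; nlinarith
    · exact h1
  have key : d * (d + s ^ 2) = c ^ 4 := by nlinarith
  have hcop : Nat.Coprime d (d + s ^ 2) := by
    apply copr_of_no_prime
    intro p pp p1 p2
    have ps2 : p ∣ s ^ 2 := by
      have := Nat.dvd_sub p2 p1
      simpa using this
    have ps : p ∣ s := pp.dvd_of_dvd_pow (n := 2) ps2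
    have pc : p ∣ c := pp.dvd_of_dvd_pow (n := 4) (key ▸ Dvd.dvd.mul_right p1 _)
    have : p ∣ 1 := hco ▸ Nat.dvd_gcd ps pc
    exact pp.one_lt.ne' (Nat.dvd_one.1 this)
  obtain ⟨p, hp⟩ : ∃ p, d = p ^ 4 :=
    exists_eq_pow_of_mul_eq_pow (Nat.isUnit_iff.2 hcop) key
  obtain ⟨q, hq⟩ : ∃ q, d + s ^ 2 = q ^ 4 :=
    exists_eq_pow_of_mul_eq_pow (Nat.isUnit_iff.2 hcop.symm)
      (by linarith [key] : (d + s ^ 2) * d = c ^ 4)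
  have hp0 : 0 < p := by
    rcases Nat.eq_zero_or_pos p with h0 | h1
    · exfalso; rw [h0] at hp; simp at hp; omega
    · exact h1
  exact no_fourth_diff q p s hp0 hs0 (by omega)

/-- L2 auxiliary, assuming b ≤ a. -/
lemma L2aux (a b t : ℕ) (hab : b ≤ a) (h : a ^ 4 + b ^ 4 = 2 * t ^ 2) : a = b := by
  rcases lt_or_eq_of_le hab with hlt | heq
  swap
  · exact heq.symm
  exfalso
  have hb0 : 0 < b := by
    rcases Nat.eq_zero_or_pos b with h0 | h1
    · exfalso
      subst h0
      have : (a ^ 2) ^ 2 = 2 * t ^ 2 := by ring_nf; ring_nf at h; omega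
      have := sq_eq_two_mul_sq (a ^ 2) t this
      have : a = 0 := by nlinarith
      omega
    · exact h1
  have hpow : b ^ 4 < a ^ 4 := Nat.pow_lt_pow_left hlt (by norm_num)
  set D := t ^ 2 - b ^ 4 with hD
  have ht2 : b ^ 4 + D = t ^ 2 := by omega
  have hD0 : 0 < D := by omega
  have ha4 : a ^ 4 = b ^ 4 + 2 * D := by omega
  have h1 : t ^ 4 = (b ^ 4 + D) ^ 2 := by rw [ht2]; ring
  have h2 : (a * b) ^ 4 + D ^ 2 = (b ^ 4 + D) ^ 2 := by
    calc (a * b) ^ 4 + D ^ 2 = a ^ 4 * b ^ 4 + D ^ 2 := by ring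
    _ = (b ^ 4 + 2 * D) * b ^ 4 + D ^ 2 := by rw [ha4]
    _ = (b ^ 4 + D) ^ 2 := by ring
  exact no_fourth_diff t (a * b) D (Nat.mul_pos (by omega) hb0) hD0 (by omega)

/-- L2 : a⁴ + b⁴ = 2t²  ⟹  a = b. -/
lemma L2 (a b t : ℕ) (h : a ^ 4 + b ^ 4 = 2 * t ^ 2) : a = b := by
  rcases le_total b a with hab | hab
  · exact L2aux a b t hab h
  · exact (L2aux b a t hab (by omega)).symm

/-- Main integral lemma: b² = a(a² + 4c⁴), gcd(a,c)=1, c > 0  ⟹  a = 0 or a = 2c². -/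
lemma main_nat (a b c : ℕ) (hc : 0 < c) (hco : Nat.Coprime a c)
    (h : b ^ 2 = a * (a ^ 2 + 4 * c ^ 4)) : a = 0 ∨ a = 2 * c ^ 2 := by
  rcases Nat.eq_zero_or_pos a with ha0 | ha0
  · exact Or.inl ha0
  rcases Nat.even_or_odd a with hae | hao
  swap
  · -- a odd : contradiction via L1odd
    exfalso
    have h2 : Nat.Coprime a 2 := Nat.coprime_two_right.2 hao
    have h4 : Nat.Coprime a (4 * c ^ 4) := by
      have ha4 : Nat.Coprime a 4 := by
        have := Nat.Coprime.mul_right h2 h2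
        simpa using this
      exact Nat.Coprime.mul_right ha4 (Nat.Coprime.pow_right 4 hco)
    have hcop : Nat.Coprime a (a ^ 2 + 4 * c ^ 4) := by
      have := (Nat.coprime_add_mul_left_right a (4 * c ^ 4) a).2 h4
      rwa [show 4 * c ^ 4 + a * a = a ^ 2 + 4 * c ^ 4 by ring] at this
    obtain ⟨s, hs⟩ : ∃ s, a = s ^ 2 :=
      exists_eq_pow_of_mul_eq_pow (Nat.isUnit_iff.2 hcop) h.symm
    obtain ⟨t, ht⟩ : ∃ t, a ^ 2 + 4 * c ^ 4 = t ^ 2 :=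
      exists_eq_pow_of_mul_eq_pow (Nat.isUnit_iff.2 hcop.symm) (by rw [mul_comm]; exact h.symm)
    have hsodd : Odd s := by
      rcases Nat.even_or_odd s with he | ho
      · exfalso
        obtain ⟨k, rfl⟩ := he
        obtain ⟨j, hj⟩ := hao
        have hk : a = 2 * (2 * k ^ 2) := by rw [hs]; ring
        omega
      · exact ho
    have hscop : Nat.Coprime s c :=
      Nat.Coprime.coprime_dvd_left (hs ▸ dvd_pow_self s two_ne_zero) hco
    have : c = 0 := L1odd s c t hsodd hscop (by rw [← ht, hs]; ring)
    omega
  · -- a even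
    obtain ⟨a', rfl⟩ := hae
    have ha' : 0 < a' := by omega
    have hcodd : Odd c := by
      rcases Nat.even_or_odd c with he | ho
      · exfalso
        have h2 : 2 ∣ Nat.gcd (a' + a') c := Nat.dvd_gcd ⟨a', by ring⟩ (even_iff_two_dvd.1 he)
        rw [hco] at h2
        omega
      · exact ho
    have hbe : 2 ∣ b := by
      apply Nat.Prime.dvd_of_dvd_pow Nat.prime_two (n := 2)
      exact ⟨(a' + a') * (a' ^ 2 + 2 * c ^ 4) + 2 * a' ^ 3, by rw [h]; ring⟩
    obtain ⟨b', rfl⟩ := hbe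
    have hb' : b' ^ 2 = 2 * (a' * (a' ^ 2 + c ^ 4)) := by nlinarith [h]
    have hacop : Nat.Coprime a' c := Nat.Coprime.coprime_dvd_left ⟨2, by ring⟩ hco
    rcases Nat.even_or_odd a' with hae' | hao'
    · -- a ≡ 0 mod 4 : contradiction via L1odd (roles swapped)
      exfalso
      obtain ⟨a'', rfl⟩ := hae'
      have ha'' : 0 < a'' := by omega
      have hacop2 : Nat.Coprime a'' c := Nat.Coprime.coprime_dvd_left ⟨2, by ring⟩ hacop
      have hbe' : 2 ∣ b' := by
        apply Nat.Prime.dvd_of_dvd_pow Nat.prime_two (n := 2)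
        exact ⟨(a'' + a'') * (4 * a'' ^ 2 + c ^ 4), by rw [hb']; ring⟩
      obtain ⟨b'', rfl⟩ := hbe'
      have hb'' : b'' ^ 2 = a'' * (4 * a'' ^ 2 + c ^ 4) := by nlinarith [hb']
      have hcop2 : Nat.Coprime a'' (4 * a'' ^ 2 + c ^ 4) := by
        have := (Nat.coprime_add_mul_left_right a'' (c ^ 4) (4 * a'')).2
          (Nat.Coprime.pow_right 4 hacop2)
        rwa [show c ^ 4 + a'' * (4 * a'') = 4 * a'' ^ 2 + c ^ 4 by ring] at this
      obtain ⟨s, hs⟩ : ∃ s, a'' = s ^ 2 :=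
        exists_eq_pow_of_mul_eq_pow (Nat.isUnit_iff.2 hcop2) hb''.symm
      obtain ⟨t, ht⟩ : ∃ t, 4 * a'' ^ 2 + c ^ 4 = t ^ 2 :=
        exists_eq_pow_of_mul_eq_pow (Nat.isUnit_iff.2 hcop2.symm) (by rw [mul_comm]; exact hb''.symm)
      have hscop : Nat.Coprime c s := by
        exact (Nat.Coprime.coprime_dvd_left (hs ▸ dvd_pow_self s two_ne_zero) hacop2).symm
      have : s = 0 := L1odd c s t hcodd hscop (by rw [← ht, hs]; ring)
      subst this
      simp at hs
      omega
    · -- a' odd : the point (2, ±4), via L2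
      right
      have ho1 : a' ^ 2 % 2 = 1 := Nat.odd_iff.1 (hao'.pow)
      have ho2 : c ^ 4 % 2 = 1 := Nat.odd_iff.1 (hcodd.pow)
      have hm : a' ^ 2 + c ^ 4 = 2 * ((a' ^ 2 + c ^ 4) / 2) := by omega
      set m := (a' ^ 2 + c ^ 4) / 2 with hmdef
      have hbe' : 2 ∣ b' := by
        apply Nat.Prime.dvd_of_dvd_pow Nat.prime_two (n := 2)
        exact ⟨2 * (a' * m), by rw [hb', hm]; ring⟩
      obtain ⟨b'', rfl⟩ := hbe'
      have hb'' : b'' ^ 2 = a' * m := by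
        have : (2 * b'') ^ 2 = 2 * (a' * (2 * m)) := by rw [← hm]; exact hb'
        nlinarith [this]
      have hcop2 : Nat.Coprime a' m := by
        apply copr_of_no_prime
        intro p pp p1 p2
        have p2m : p ∣ a' ^ 2 + c ^ 4 := by
          rw [hm]; exact Dvd.dvd.mul_left p2 2
        have pc4 : p ∣ c ^ 4 := by
          have := Nat.dvd_sub p2m (p1.pow two_ne_zero)
          simpa using this
        have pc : p ∣ c := pp.dvd_of_dvd_pow pc4
        have : p ∣ 1 := hacop ▸ Nat.dvd_gcd p1 pc
        exact pp.one_lt.ne' (Nat.dvd_one.1 this)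
      obtain ⟨s, hs⟩ : ∃ s, a' = s ^ 2 :=
        exists_eq_pow_of_mul_eq_pow (Nat.isUnit_iff.2 hcop2) hb''.symm
      obtain ⟨t, ht⟩ : ∃ t, m = t ^ 2 :=
        exists_eq_pow_of_mul_eq_pow (Nat.isUnit_iff.2 hcop2.symm) (by rw [mul_comm]; exact hb''.symm)
      have hL2 : s = c := by
        apply L2 s c t
        have : a' ^ 2 + c ^ 4 = 2 * t ^ 2 := by rw [hm, ht]
        rw [hs] at this
        calc s ^ 4 + c ^ 4 = (s ^ 2) ^ 2 + c ^ 4 := by ring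
        _ = 2 * t ^ 2 := this
      rw [hs, hL2]
      ring

theorem E_x_cubed_plus_four_x_rational_points (x y : ℚ) :
    y ^ 2 = x ^ 3 + 4 * x → (x = 0 ∧ y = 0) ∨ (x = 2 ∧ (y = 4 ∨ y = -4)) := by
  intro h
  have hqz : (x.den : ℚ) ≠ 0 := by exact_mod_cast x.den_nz
  have hsz : (y.den : ℚ) ≠ 0 := by exact_mod_cast y.den_nz
  have hx : (x.num : ℚ) = x * x.den := (div_eq_iff hqz).1 (Rat.num_div_den x)
  have hr : (y.num : ℚ) = y * y.den := (div_eq_iff hsz).1 (Rat.num_div_den y)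
  have E0 : ((y.num : ℚ)) ^ 2 * (x.den : ℚ) ^ 3 =
      ((x.num : ℚ) ^ 3 + 4 * (x.num : ℚ) * (x.den : ℚ) ^ 2) * (y.den : ℚ) ^ 2 := by
    rw [hx, hr]
    linear_combination (x.den : ℚ) ^ 3 * (y.den : ℚ) ^ 2 * h
  have E : (y.num) ^ 2 * (x.den : ℤ) ^ 3 =
      ((x.num) ^ 3 + 4 * x.num * (x.den : ℤ) ^ 2) * (y.den : ℤ) ^ 2 := by
    exact_mod_cast E0
  -- coprimality
  have hxco : IsCoprime ((x.den : ℤ)) x.num := by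
    rw [Int.isCoprime_iff_gcd_eq_one, Int.gcd]
    simpa using Nat.Coprime.symm x.reduced
  have hyco : IsCoprime ((y.den : ℤ)) y.num := by
    rw [Int.isCoprime_iff_gcd_eq_one, Int.gcd]
    simpa using Nat.Coprime.symm y.reduced
  have hq3M : IsCoprime ((x.den : ℤ) ^ 3) (x.num ^ 3 + 4 * x.num * (x.den : ℤ) ^ 2) := by
    have h1 : IsCoprime ((x.den : ℤ)) (x.num ^ 3) := hxco.pow_right
    have h2 := h1.add_mul_left_right (4 * x.num * (x.den : ℤ))
    have h3 : x.num ^ 3 + (x.den : ℤ) * (4 * x.num * (x.den : ℤ)) =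
        x.num ^ 3 + 4 * x.num * (x.den : ℤ) ^ 2 := by ring
    rw [h3] at h2
    exact h2.pow_left
  have hdvd1 : ((x.den : ℤ) ^ 3) ∣ ((y.den : ℤ)) ^ 2 := by
    apply hq3M.dvd_of_dvd_mul_left
    exact ⟨y.num ^ 2, by linarith [E]⟩
  have hdvd2 : ((y.den : ℤ) ^ 2) ∣ ((x.den : ℤ)) ^ 3 := by
    apply (hyco.pow (m := 2) (n := 2)).dvd_of_dvd_mul_left
    exact ⟨x.num ^ 3 + 4 * x.num * (x.den : ℤ) ^ 2, by rw [E]; ring⟩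
  -- antisymmetry of divisibility
  have hqs : ((x.den : ℤ)) ^ 3 = ((y.den : ℤ)) ^ 2 :=
    Int.dvd_antisymm (by positivity) (by positivity) hdvd1 hdvd2
  have hqsN : x.den ^ 3 = y.den ^ 2 := by exact_mod_cast hqs
  have hq2 : x.den ^ 2 ∣ y.den ^ 2 := by
    refine ⟨x.den, ?_⟩
    rw [← hqsN]; ring
  have hqd : x.den ∣ y.den := (Nat.pow_dvd_pow_iff two_ne_zero).1 hq2
  obtain ⟨e, he⟩ := hqd
  have hdpos : 0 < x.den := x.pos
  have hq_e : x.den = e ^ 2 := by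
    have h3 : x.den ^ 2 * x.den = x.den ^ 2 * e ^ 2 := by
      calc x.den ^ 2 * x.den = x.den ^ 3 := by ring
      _ = y.den ^ 2 := hqsN
      _ = x.den ^ 2 * e ^ 2 := by rw [he]; ring
    exact Nat.eq_of_mul_eq_mul_left (pow_pos hdpos 2) h3
  have he0 : 0 < e := by
    rcases Nat.eq_zero_or_pos e with h0 | h1
    · exfalso; rw [h0] at hq_e; simp at hq_e
    · exact h1
  have hq3z : ((x.den : ℤ)) ^ 3 ≠ 0 := by positivity
  have Er : y.num ^ 2 = x.num ^ 3 + 4 * x.num * (x.den : ℤ) ^ 2 := by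
    have hE := E
    rw [← hqs] at hE
    exact mul_right_cancel₀ hq3z hE
  have hqpos : (0 : ℤ) < (x.den : ℤ) := by exact_mod_cast hdpos
  have hp0 : 0 ≤ x.num := by
    by_contra hneg
    push_neg at hneg
    nlinarith [Er, sq_nonneg y.num, sq_nonneg x.num, mul_pos hqpos hqpos]
  have hA : ((x.num.natAbs : ℤ)) = x.num := Int.natAbs_of_nonneg hp0
  have hqe : ((x.den : ℤ)) = (e : ℤ) ^ 2 := by exact_mod_cast hq_e
  have EN : y.num.natAbs ^ 2 = x.num.natAbs * (x.num.natAbs ^ 2 + 4 * e ^ 4) := by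
    have h1 : ((y.num.natAbs : ℤ)) ^ 2 = y.num ^ 2 := by simp [Int.natAbs_sq]
    have hz : ((y.num.natAbs : ℤ)) ^ 2 =
        (x.num.natAbs : ℤ) * ((x.num.natAbs : ℤ) ^ 2 + 4 * (e : ℤ) ^ 4) := by
      rw [h1, Er, hqe, hA]
      ring
    exact_mod_cast hz
  have hcoAe : Nat.Coprime x.num.natAbs e :=
    Nat.Coprime.coprime_dvd_right (hq_e ▸ dvd_pow_self e two_ne_zero) x.reduced
  rcases main_nat x.num.natAbs y.num.natAbs e he0 hcoAe EN with hA0 | hA2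
  · -- x = 0
    have hx0 : x = 0 := by
      rw [← Rat.num_eq_zero]
      exact Int.natAbs_eq_zero.1 hA0
    left
    refine ⟨hx0, ?_⟩
    rw [hx0] at h
    norm_num at h
    exact h
  · -- x = 2
    have hnum : x.num = 2 * (e : ℤ) ^ 2 := by
      rw [← hA]
      exact_mod_cast congrArg (Nat.cast : ℕ → ℤ) hA2
    have hez : ((e : ℚ)) ≠ 0 := by exact_mod_cast he0.ne'
    have hx2 : x = 2 := by
      have hxq : x = (x.num : ℚ) / (x.den : ℚ) := (Rat.num_div_den x).symm
      rw [hxq]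
      have h1 : ((x.num : ℚ)) = 2 * (e : ℚ) ^ 2 := by exact_mod_cast hnum
      have h2 : ((x.den : ℚ)) = (e : ℚ) ^ 2 := by exact_mod_cast hq_e
      rw [h1, h2]
      field_simp
    right
    refine ⟨hx2, ?_⟩
    rw [hx2] at h
    norm_num at h
    have hfac : (y - 4) * (y + 4) = 0 := by linear_combination h
    rcases mul_eq_zero.1 hfac with h4 | h4
    · left; linarith [sub_eq_zero.1 h4]
    · right; linarith [eq_neg_of_add_eq_zero_left h4]
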